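/- arXiv:1905.00216 — 6 statements merged into one kernel-verified Lean document; each statement's English description precedes it below -/
import Mathlib

section
/- Let h : (0,∞) → ℝ be continuous, positive, and increasing, let R ∈ (0,∞], let (t_j) ⊂ (0,R) converge to some t ∈ (0,R), and let (p_j) ⊂ (1,p₀) with p_j → 1 for some p₀ > 1. If R = ∞, assume moreover that h^{-1/(p₀-1)} is integrable at infinity. Then lim_{j→∞} ( ∫_{t_j}^R h(s)^{-1/(p_j-1)} ds )^{p_j-1} = 1/h(t). -/
open MeasureTheory Filter Set

lemma my_aesm (h : ℝ → ℝ) (hcont : ContinuousOn h (Set.Ioi 0))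
    (hpos : ∀ s : ℝ, 0 < s → 0 < h s) (q : ℝ) {s : Set ℝ}
    (hsub : s ⊆ Set.Ioi 0) :
    AEStronglyMeasurable (fun x => h x ^ q) (volume.restrict s) :=
  ((hcont.rpow_const fun x hx => Or.inl (hpos x hx).ne').aestronglyMeasurable
    measurableSet_Ioi).mono_measure (Measure.restrict_mono hsub le_rfl)

lemma my_int_bdd (h : ℝ → ℝ) (hcont : ContinuousOn h (Set.Ioi 0))
    (hpos : ∀ s : ℝ, 0 < s → 0 < h s) {s : Set ℝ} (hm : MeasurableSet s)
    (hsub : s ⊆ Set.Ioi 0) (hfin : volume s ≠ ⊤) {c q : ℝ} (hc : 0 < c) (hq : 0 ≤ q)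
    (hbd : ∀ x ∈ s, c ≤ h x) :
    IntegrableOn (fun x => h x ^ (-q)) s := by
  apply Integrable.mono' (g := fun _ => c ^ (-q))
      (integrableOn_const hfin)
      (my_aesm h hcont hpos _ hsub)
  rw [ae_restrict_iff' hm]
  refine Eventually.of_forall fun x hx => ?_
  have hx0 : 0 < h x := hpos x (hsub hx)
  rw [Real.norm_eq_abs, abs_of_pos (Real.rpow_pos_of_pos hx0 _)]
  exact Real.rpow_le_rpow_of_nonpos hc (hbd x hx) (neg_nonpos.2 hq)

lemma my_powlim (p : ℕ → ℝ) (hplim : Tendsto p atTop (nhds 1)) {K : ℝ} (hK : 0 < K) :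
    Tendsto (fun j => K ^ (p j - 1)) atTop (nhds 1) := by
  have h1 : Tendsto (fun j => ((K, p j - 1) : ℝ × ℝ)) atTop (nhds (K, 0)) := by
    refine Tendsto.prodMk_nhds tendsto_const_nhds ?_
    simpa using hplim.sub_const 1
  have h2 := (Real.continuousAt_rpow (K, 0) (Or.inl hK.ne')).tendsto.comp h1
  simpa [Real.rpow_zero, Function.comp_def] using h2

lemma my_aux (h : ℝ → ℝ) (T : ℝ) (t p : ℕ → ℝ) (S : ℕ → Set ℝ)
    (hcont : ContinuousOn h (Set.Ioi 0))
    (hpos : ∀ s : ℝ, 0 < s → 0 < h s)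
    (hT0 : 0 < T)
    (ht : ∀ j, 0 < t j)
    (htlim : Tendsto t atTop (nhds T))
    (hp : ∀ j, 1 < p j)
    (hplim : Tendsto p atTop (nhds 1))
    (hSm : ∀ j, MeasurableSet (S j))
    (hSs : ∀ j, S j ⊆ Set.Ioi (t j))
    (hsub : ∃ δ₂ > 0, ∀ᶠ j in atTop, ∀ δ', 0 < δ' → δ' ≤ δ₂ → Set.Ioo (t j) (t j + δ') ⊆ S j)
    (hKex : ∃ K, 1 ≤ K ∧ ∀ᶠ j in atTop,
      IntegrableOn (fun s => h s ^ (-(1 / (p j - 1)))) (S j) volume ∧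
      ∫ s in S j, h s ^ (-(1 / (p j - 1))) ≤ K * (h (t j)) ^ (-(1 / (p j - 1)))) :
    Tendsto (fun j => (∫ s in S j, h s ^ (-(1 / (p j - 1)))) ^ (p j - 1)) atTop
      (nhds (1 / h T)) := by
  have hTpos : 0 < h T := hpos T hT0
  have hcontT : ContinuousAt h T := hcont.continuousAt (Ioi_mem_nhds hT0)
  have htj : Tendsto (fun j => h (t j)) atTop (nhds (h T)) := hcontT.tendsto.comp htlim
  have hxe : ∀ j, ∀ x : ℝ, 0 < x → (x ^ (-(1 / (p j - 1)))) ^ (p j - 1) = x⁻¹ := by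
    intro j x hx
    have hpj : p j - 1 ≠ 0 := by have := hp j; linarith
    rw [← Real.rpow_mul hx.le]
    rw [show (-(1 / (p j - 1))) * (p j - 1) = -1 by field_simp]
    exact Real.rpow_neg_one x
  rw [Metric.tendsto_nhds]
  intro ε hε
  obtain ⟨K, hK1, hKev⟩ := hKex
  obtain ⟨δ₂, hδ₂, hsubev⟩ := hsub
  set L := 1 / h T with hL
  set ε' := ε / 2 * (h T) ^ 2 with hε'def
  have hε' : 0 < ε' := by positivity
  set c := h T + ε' with hcdef
  have hc : 0 < c := by positivity
  have hcL : L - ε < c⁻¹ := by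
    have h1 : (h T)⁻¹ - c⁻¹ = ε' / (h T * c) := by
      rw [inv_sub_inv hTpos.ne' hc.ne', hcdef]; ring
    have h2 : ε' / (h T * c) ≤ ε / 2 := by
      rw [div_le_iff₀ (by positivity)]
      have hTc : h T ≤ c := by rw [hcdef]; linarith
      nlinarith
    have h3 : L = (h T)⁻¹ := one_div _
    have h4 : 0 < c⁻¹ := by positivity
    nlinarith
  obtain ⟨δ₁, hδ₁, hδ₁p⟩ := Metric.continuousAt_iff.mp hcontT ε' hε'
  set δ := min δ₁ δ₂ / 2 with hδdef
  have hδ : 0 < δ := by positivity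
  have hδδ₂ : δ ≤ δ₂ := by
    rw [hδdef]; have := min_le_right δ₁ δ₂; linarith
  have ev1 : ∀ᶠ j in atTop, dist (t j) T < δ := Metric.tendsto_nhds.mp htlim δ hδ
  have hLo : Tendsto (fun j => δ ^ (p j - 1) * c⁻¹) atTop (nhds c⁻¹) := by
    have := (my_powlim p hplim hδ).mul_const c⁻¹
    simpa using this
  have evLo : ∀ᶠ j in atTop, L - ε < δ ^ (p j - 1) * c⁻¹ := hLo.eventually_const_lt hcL
  have hU : Tendsto (fun j => K ^ (p j - 1) * (h (t j))⁻¹) atTop (nhds L) := by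
    have := (my_powlim p hplim (lt_of_lt_of_le one_pos hK1)).mul (htj.inv₀ hTpos.ne')
    simpa [hL, one_div] using this
  have evU : ∀ᶠ j in atTop, K ^ (p j - 1) * (h (t j))⁻¹ < L + ε :=
    hU.eventually_lt_const (by linarith)
  filter_upwards [hKev, hsubev, ev1, evLo, evU] with j hKj hsubj hdist hlo hup
  obtain ⟨hint, hbound⟩ := hKj
  have hpj : 1 < p j := hp j
  have he : 0 < p j - 1 := by linarith
  set q := 1 / (p j - 1) with hqdef
  have hq : 0 < q := by rw [hqdef]; positivity
  set I := ∫ s in S j, h s ^ (-q) with hIdef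
  have hfpos : ∀ x ∈ S j, 0 < h x ^ (-q) := fun x hx =>
    Real.rpow_pos_of_pos (hpos x (lt_trans (ht j) (hSs j hx))) _
  have hI0 : 0 ≤ I := setIntegral_nonneg (hSm j) fun x hx => (hfpos x hx).le
  have htj0 : 0 < h (t j) := hpos _ (ht j)
  -- upper bound
  have hFup : I ^ (p j - 1) < L + ε := by
    have h1 : I ^ (p j - 1) ≤ (K * (h (t j)) ^ (-q)) ^ (p j - 1) :=
      Real.rpow_le_rpow hI0 hbound he.le
    have h2 : (K * (h (t j)) ^ (-q)) ^ (p j - 1)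
        = K ^ (p j - 1) * (h (t j))⁻¹ := by
      rw [Real.mul_rpow (by linarith) (Real.rpow_pos_of_pos htj0 _).le, hxe j _ htj0]
    linarith [h1, h2 ▸ h1]
  -- lower bound
  have hsubset : Set.Ioo (t j) (t j + δ) ⊆ S j := hsubj δ hδ hδδ₂
  have hIoo_sub : Set.Ioo (t j) (t j + δ) ⊆ Set.Ioi (0:ℝ) :=
    fun x hx => lt_trans (ht j) hx.1
  have hhle : ∀ x ∈ Set.Ioo (t j) (t j + δ), h x ≤ c := by
    intro x hx
    have hd : dist x T < δ₁ := by
      have h1 : dist x (t j) < δ := by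
        rw [Real.dist_eq, abs_lt]; constructor
        · linarith [hx.1]
        · linarith [hx.2]
      have h2 := dist_triangle x (t j) T
      have h3 : 2 * δ ≤ δ₁ := by
        rw [hδdef]; have := min_le_left δ₁ δ₂; linarith
      linarith
    have := hδ₁p hd
    rw [Real.dist_eq, abs_lt] at this
    rw [hcdef]; linarith [this.1, this.2]
  have hlow : δ * c ^ (-q) ≤ I := by
    have hIoo_int : IntegrableOn (fun s => h s ^ (-q)) (Set.Ioo (t j) (t j + δ)) :=
      hint.mono_set hsubset
    have h1 : c ^ (-q) * (volume (Set.Ioo (t j) (t j + δ))).toReal ≤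
        ∫ s in Set.Ioo (t j) (t j + δ), h s ^ (-q) := by
      change c ^ (-q) * volume.real (Set.Ioo (t j) (t j + δ)) ≤ _
      apply setIntegral_ge_of_const_le_real measurableSet_Ioo
      · rw [Real.volume_Ioo]; exact ENNReal.ofReal_ne_top
      · intro x hx
        exact Real.rpow_le_rpow_of_nonpos (hpos x (hIoo_sub hx)) (hhle x hx)
          (neg_nonpos.2 hq.le)
      · exact hIoo_int
    have h2 : (volume (Set.Ioo (t j) (t j + δ))).toReal = δ := by
      rw [Real.volume_Ioo, ENNReal.toReal_ofReal (by linarith)]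
      ring
    have h3 : ∫ s in Set.Ioo (t j) (t j + δ), h s ^ (-q) ≤ I := by
      apply setIntegral_mono_set hint
      · exact (ae_restrict_iff' (hSm j)).mpr (Eventually.of_forall fun x hx => (hfpos x hx).le)
      · exact HasSubset.Subset.eventuallyLE hsubset
    rw [h2] at h1
    linarith [mul_comm (c ^ (-q)) δ ▸ h1]
  have hFlow : L - ε < I ^ (p j - 1) := by
    have h1 : (δ * c ^ (-q)) ^ (p j - 1) ≤ I ^ (p j - 1) :=
      Real.rpow_le_rpow (by positivity) hlow he.le
    have h2 : (δ * c ^ (-q)) ^ (p j - 1) = δ ^ (p j - 1) * c⁻¹ := by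
      rw [Real.mul_rpow hδ.le (Real.rpow_pos_of_pos hc _).le, hxe j c hc]
    linarith [h2 ▸ h1]
  rw [Real.dist_eq, abs_sub_lt_iff]
  constructor <;> linarith

/-- limit of (∫_{t_j}^R h^{-1/(p_j-1)})^{p_j-1} as p_j → 1, t_j → t. -/
theorem stmt_0 (h : ℝ → ℝ) (R : EReal) (p₀ : ℝ) (t : ℕ → ℝ) (T : ℝ) (p : ℕ → ℝ)
    (hcont : ContinuousOn h (Set.Ioi 0))
    (hpos : ∀ s : ℝ, 0 < s → 0 < h s)
    (hmono : MonotoneOn h (Set.Ioi 0))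
    (hR : (0 : EReal) < R)
    (hp₀ : 1 < p₀)
    (ht : ∀ j, 0 < t j ∧ (t j : EReal) < R)
    (htlim : Tendsto t atTop (nhds T))
    (hT0 : 0 < T) (hTR : (T : EReal) < R)
    (hp : ∀ j, 1 < p j ∧ p j < p₀)
    (hplim : Tendsto p atTop (nhds 1))
    (hint : R = ⊤ → ∃ a : ℝ, IntegrableOn (fun s => h s ^ (-(1 / (p₀ - 1)))) (Set.Ioi a)) :
    Tendsto (fun j => (∫ s in {s : ℝ | t j < s ∧ (s : EReal) < R},
        h s ^ (-(1 / (p j - 1)))) ^ (p j - 1)) atTop (nhds (1 / h T)) := by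
  have ht' : ∀ j, 0 < t j := fun j => (ht j).1
  have hp' : ∀ j, 1 < p j := fun j => (hp j).1
  induction R using EReal.rec with
  | bot => exact absurd hR (by simp)
  | top =>
    obtain ⟨a, hInt⟩ := hint rfl
    have hSeq : ∀ j, {s : ℝ | t j < s ∧ (s : EReal) < (⊤ : EReal)} = Set.Ioi (t j) := by
      intro j; ext x; simp [EReal.coe_lt_top]
    simp only [hSeq]
    have hq₀ : (0:ℝ) < 1 / (p₀ - 1) := div_pos one_pos (by linarith)
    -- find A beyond a and T where h exceeds h T
    have hA : ∃ A, a < A ∧ T < A ∧ h T < h A := by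
      by_contra hcon
      push_neg at hcon
      set b := max a T + 1 with hb
      have hba : a < b := lt_of_le_of_lt (le_max_left a T) (by rw [hb]; linarith)
      have hbT : T < b := lt_of_le_of_lt (le_max_right a T) (by rw [hb]; linarith)
      have hb0 : 0 < b := lt_trans hT0 hbT
      have hIb := hInt.mono_set (Set.Ioi_subset_Ioi hba.le)
      have hcb : ∀ s ∈ Set.Ioi b, h s ≤ h T := fun s hs =>
        hcon s (lt_trans hba hs) (lt_trans hbT hs)
      have hc : 0 < (h T) ^ (-(1 / (p₀ - 1))) := Real.rpow_pos_of_pos (hpos T hT0) _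
      have hconst : Integrable (fun _ : ℝ => (h T) ^ (-(1 / (p₀ - 1))))
          (volume.restrict (Set.Ioi b)) := by
        apply hIb.mono' aestronglyMeasurable_const
        rw [ae_restrict_iff' measurableSet_Ioi]
        refine Eventually.of_forall fun s hs => ?_
        rw [Real.norm_eq_abs, abs_of_pos hc]
        exact Real.rpow_le_rpow_of_nonpos (hpos s (lt_trans hb0 hs)) (hcb s hs)
          (neg_nonpos.2 hq₀.le)
      rw [integrable_const_iff] at hconst
      rcases hconst with h1 | h1
      · exact hc.ne' h1
      · rw [isFiniteMeasure_restrict, Real.volume_Ioi] at h1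
        exact (h1 rfl).elim
    obtain ⟨A, haA, hTA, hhTA⟩ := hA
    have hA0 : 0 < A := lt_trans hT0 hTA
    have hApos : 0 < h A := hpos A hA0
    set C := ∫ s in Set.Ioi A, h s ^ (-(1 / (p₀ - 1))) with hCdef
    have hC0 : 0 ≤ C := setIntegral_nonneg measurableSet_Ioi fun x hx =>
      (Real.rpow_pos_of_pos (hpos x (lt_trans hA0 hx)) _).le
    have hIA : IntegrableOn (fun s => h s ^ (-(1 / (p₀ - 1)))) (Set.Ioi A) :=
      hInt.mono_set (Set.Ioi_subset_Ioi haA.le)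
    apply my_aux h T t p (fun j => Set.Ioi (t j)) hcont hpos hT0 ht' htlim hp' hplim
      (fun j => measurableSet_Ioi) (fun j => subset_rfl)
    · exact ⟨1, one_pos, Eventually.of_forall fun j δ' _ _ => Set.Ioo_subset_Ioi_self⟩
    · refine ⟨A - T + 1 + C * (h A) ^ (1 / (p₀ - 1)), ?_, ?_⟩
      · have : 0 ≤ C * (h A) ^ (1 / (p₀ - 1)) :=
          mul_nonneg hC0 (Real.rpow_pos_of_pos hApos _).le
        linarith
      filter_upwards [Metric.tendsto_nhds.mp htlim (min 1 (A - T)) (lt_min one_pos (by linarith))]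
        with j hj
      rw [Real.dist_eq, abs_lt, lt_min_iff, neg_lt, lt_min_iff] at hj
      obtain ⟨⟨hj1, hj2⟩, hj3, hj4⟩ := hj
      have htj0 := ht' j
      have htjA : t j < A := by linarith
      have htjT1 : T - 1 < t j := by linarith
      have htjpos : 0 < h (t j) := hpos _ htj0
      have hepos : (0:ℝ) < p j - 1 := by have := hp' j; linarith
      have hq : (0:ℝ) < 1 / (p j - 1) := div_pos one_pos hepos
      have hqq₀ : 1 / (p₀ - 1) ≤ 1 / (p j - 1) :=
        one_div_le_one_div_of_le hepos (by linarith [(hp j).2])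
      have hAX : h (t j) ≤ h A := hmono (Set.mem_Ioi.2 htj0) (Set.mem_Ioi.2 hA0) htjA.le
      -- integrability on Ioc (t j) A
      have hIocsub : Set.Ioc (t j) A ⊆ Set.Ioi 0 := fun x hx => lt_trans htj0 hx.1
      have hfinIoc : volume (Set.Ioc (t j) A) ≠ ⊤ := by
        rw [Real.volume_Ioc]; exact ENNReal.ofReal_ne_top
      have hbdIoc : ∀ x ∈ Set.Ioc (t j) A, h (t j) ≤ h x := fun x hx =>
        hmono (Set.mem_Ioi.2 htj0) (hIocsub hx) hx.1.le
      have I1 : IntegrableOn (fun s => h s ^ (-(1 / (p j - 1)))) (Set.Ioc (t j) A) :=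
        my_int_bdd h hcont hpos measurableSet_Ioc hIocsub hfinIoc htjpos hq.le hbdIoc
      -- integrability on Ioi A
      have hptw : ∀ s ∈ Set.Ioi A, h s ^ (-(1 / (p j - 1))) ≤
          (h A) ^ (1 / (p₀ - 1) - 1 / (p j - 1)) * h s ^ (-(1 / (p₀ - 1))) := by
        intro s hs
        have hs0 : 0 < h s := hpos s (lt_trans hA0 hs)
        have hhA : h A ≤ h s := hmono (Set.mem_Ioi.2 hA0) (Set.mem_Ioi.2 (lt_trans hA0 hs)) hs.le
        have heq : h s ^ (-(1 / (p j - 1))) =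
            h s ^ (1 / (p₀ - 1) - 1 / (p j - 1)) * h s ^ (-(1 / (p₀ - 1))) := by
          rw [show (-(1 / (p j - 1)) : ℝ) = (1 / (p₀ - 1) - 1 / (p j - 1)) + (-(1 / (p₀ - 1)))
            by ring, Real.rpow_add hs0]
        rw [heq]
        exact mul_le_mul_of_nonneg_right
          (Real.rpow_le_rpow_of_nonpos hApos hhA (by linarith))
          (Real.rpow_pos_of_pos hs0 _).le
      have hIoiA0 : Set.Ioi A ⊆ Set.Ioi (0:ℝ) := Set.Ioi_subset_Ioi hA0.le
      have I2 : IntegrableOn (fun s => h s ^ (-(1 / (p j - 1)))) (Set.Ioi A) := by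
        apply Integrable.mono' (hIA.const_mul ((h A) ^ (1 / (p₀ - 1) - 1 / (p j - 1))))
          (my_aesm h hcont hpos _ hIoiA0)
        rw [ae_restrict_iff' measurableSet_Ioi]
        refine Eventually.of_forall fun s hs => ?_
        have hs0 : 0 < h s := hpos s (lt_trans hA0 hs)
        rw [Real.norm_eq_abs, abs_of_pos (Real.rpow_pos_of_pos hs0 _)]
        exact hptw s hs
      have hunion : Set.Ioc (t j) A ∪ Set.Ioi A = Set.Ioi (t j) := Set.Ioc_union_Ioi_eq_Ioi htjA.le
      have hintj : IntegrableOn (fun s => h s ^ (-(1 / (p j - 1)))) (Set.Ioi (t j)) := by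
        rw [← hunion]; exact I1.union I2
      refine ⟨hintj, ?_⟩
      have hsplit : ∫ s in Set.Ioi (t j), h s ^ (-(1 / (p j - 1))) =
          (∫ s in Set.Ioc (t j) A, h s ^ (-(1 / (p j - 1)))) +
          ∫ s in Set.Ioi A, h s ^ (-(1 / (p j - 1))) := by
        rw [← hunion, setIntegral_union (Set.Ioc_disjoint_Ioi le_rfl) measurableSet_Ioi I1 I2]
      have cjpos : 0 < (h (t j)) ^ (-(1 / (p j - 1))) := Real.rpow_pos_of_pos htjpos _
      have b1 : ∫ s in Set.Ioc (t j) A, h s ^ (-(1 / (p j - 1))) ≤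
          (A - t j) * (h (t j)) ^ (-(1 / (p j - 1))) := by
        have := setIntegral_mono_on I1 (integrableOn_const hfinIoc)
          measurableSet_Ioc (fun x hx =>
            Real.rpow_le_rpow_of_nonpos htjpos (hbdIoc x hx) (neg_nonpos.2 hq.le))
        rwa [setIntegral_const, measureReal_def, Real.volume_Ioc, ENNReal.toReal_ofReal (by linarith),
          smul_eq_mul] at this
      have b2 : ∫ s in Set.Ioi A, h s ^ (-(1 / (p j - 1))) ≤
          (h A) ^ (1 / (p₀ - 1) - 1 / (p j - 1)) * C := by
        have := setIntegral_mono_on I2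
          (hIA.const_mul ((h A) ^ (1 / (p₀ - 1) - 1 / (p j - 1)))) measurableSet_Ioi hptw
        rwa [integral_const_mul] at this
      have b3 : (h A) ^ (1 / (p₀ - 1) - 1 / (p j - 1)) * C ≤
          C * (h A) ^ (1 / (p₀ - 1)) * (h (t j)) ^ (-(1 / (p j - 1))) := by
        have heq : (h A) ^ (1 / (p₀ - 1) - 1 / (p j - 1)) =
            (h A) ^ (1 / (p₀ - 1)) * (h A) ^ (-(1 / (p j - 1))) := by
          rw [← Real.rpow_add hApos]; ring_nf
        have hle : (h A) ^ (-(1 / (p j - 1))) ≤ (h (t j)) ^ (-(1 / (p j - 1))) :=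
          Real.rpow_le_rpow_of_nonpos htjpos hAX (neg_nonpos.2 hq.le)
        calc (h A) ^ (1 / (p₀ - 1) - 1 / (p j - 1)) * C
            = C * ((h A) ^ (1 / (p₀ - 1)) * (h A) ^ (-(1 / (p j - 1)))) := by rw [heq]; ring
          _ ≤ C * ((h A) ^ (1 / (p₀ - 1)) * (h (t j)) ^ (-(1 / (p j - 1)))) := by
              apply mul_le_mul_of_nonneg_left _ hC0
              exact mul_le_mul_of_nonneg_left hle (Real.rpow_pos_of_pos hApos _).le
          _ = C * (h A) ^ (1 / (p₀ - 1)) * (h (t j)) ^ (-(1 / (p j - 1))) := by ring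
      have hfinal : (A - t j) * (h (t j)) ^ (-(1 / (p j - 1))) ≤
          (A - T + 1) * (h (t j)) ^ (-(1 / (p j - 1))) :=
        mul_le_mul_of_nonneg_right (by linarith) cjpos.le
      rw [hsplit]
      have : (A - T + 1 + C * (h A) ^ (1 / (p₀ - 1))) * (h (t j)) ^ (-(1 / (p j - 1))) =
          (A - T + 1) * (h (t j)) ^ (-(1 / (p j - 1))) +
          C * (h A) ^ (1 / (p₀ - 1)) * (h (t j)) ^ (-(1 / (p j - 1))) := by ring
      linarith
  | coe r =>
    have hTr : T < r := by exact_mod_cast hTR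
    have hSeq : ∀ j, {s : ℝ | t j < s ∧ (s : EReal) < (r : EReal)} = Set.Ioo (t j) r := by
      intro j; ext x; simp [Set.mem_Ioo, EReal.coe_lt_coe_iff]
    simp only [hSeq]
    apply my_aux h T t p (fun j => Set.Ioo (t j) r) hcont hpos hT0 ht' htlim hp' hplim
      (fun j => measurableSet_Ioo) (fun j => Set.Ioo_subset_Ioi_self)
    · -- hsub
      refine ⟨(r - T) / 2, by linarith, ?_⟩
      filter_upwards [Metric.tendsto_nhds.mp htlim ((r - T) / 2) (by linarith)] with j hj δ' hδ'0 hδ'le x hx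
      rw [Real.dist_eq, abs_lt] at hj
      refine ⟨hx.1, ?_⟩
      have := hx.2
      linarith [hj.2, hδ'le, this]
    · -- hKex
      refine ⟨r - T + 1, by linarith, ?_⟩
      filter_upwards [Metric.tendsto_nhds.mp htlim 1 one_pos] with j hj
      rw [Real.dist_eq, abs_lt] at hj
      have htj0 := ht' j
      have htjr : t j < r := by exact_mod_cast (ht j).2
      have htjpos : 0 < h (t j) := hpos _ htj0
      have hqpos : (0:ℝ) < 1 / (p j - 1) := by
        have := hp' j; exact div_pos one_pos (by linarith)
      have hIoosub : Set.Ioo (t j) r ⊆ Set.Ioi 0 := fun x hx => lt_trans htj0 hx.1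
      have hfin : volume (Set.Ioo (t j) r) ≠ ⊤ := by
        rw [Real.volume_Ioo]; exact ENNReal.ofReal_ne_top
      have hbd : ∀ x ∈ Set.Ioo (t j) r, h (t j) ≤ h x := fun x hx =>
        hmono (Set.mem_Ioi.2 htj0) (hIoosub hx) hx.1.le
      have hint : IntegrableOn (fun s => h s ^ (-(1 / (p j - 1)))) (Set.Ioo (t j) r) :=
        my_int_bdd h hcont hpos measurableSet_Ioo hIoosub hfin htjpos hqpos.le hbd
      refine ⟨hint, ?_⟩
      have h1 : ∫ s in Set.Ioo (t j) r, h s ^ (-(1 / (p j - 1))) ≤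
          ∫ _ in Set.Ioo (t j) r, (h (t j)) ^ (-(1 / (p j - 1))) := by
        apply setIntegral_mono_on hint (integrableOn_const hfin) measurableSet_Ioo
        intro x hx
        exact Real.rpow_le_rpow_of_nonpos htjpos (hbd x hx) (neg_nonpos.2 hqpos.le)
      have h2 : ∫ _ in Set.Ioo (t j) r, (h (t j)) ^ (-(1 / (p j - 1)))
          = (r - t j) * (h (t j)) ^ (-(1 / (p j - 1))) := by
        rw [setIntegral_const, measureReal_def, Real.volume_Ioo, ENNReal.toReal_ofReal (by linarith), smul_eq_mul]
      have h3 : (r - t j) * (h (t j)) ^ (-(1 / (p j - 1))) ≤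
          (r - T + 1) * (h (t j)) ^ (-(1 / (p j - 1))) :=
        mul_le_mul_of_nonneg_right (by linarith [hj.1]) (Real.rpow_pos_of_pos htjpos _).le
      linarith
end

section
/- Let k > 1, p > 1 and q > 0 be real numbers. Then there exists q₀ ∈ (q/k, q] such that |q₀ k^i − p + 1| ≥ (k−1)q/(2k) for every integer i ≥ 0. Moreover, if p − 1 ≤ q/k one may take q₀ = q. -/
/-- choice of the starting exponent in the Moser iteration. -/
theorem stmt_1 (k p q : ℝ) (hk : 1 < k) (hp : 1 < p) (hq : 0 < q) :
    (∃ q₀ : ℝ, q / k < q₀ ∧ q₀ ≤ q ∧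
      ∀ i : ℕ, (k - 1) * q / (2 * k) ≤ |q₀ * k ^ i - p + 1|) ∧
    (p - 1 ≤ q / k →
      ∀ i : ℕ, (k - 1) * q / (2 * k) ≤ |q * k ^ i - p + 1|) := by
  have hk0 : (0:ℝ) < k := by linarith
  set c := (k - 1) * q / (2 * k) with hc_def
  have hc : 0 < c := div_pos (by nlinarith) (by linarith)
  have h2ck : 2 * c * k = q * (k - 1) := by
    rw [hc_def]; field_simp
  have second : p - 1 ≤ q / k → ∀ i : ℕ, c ≤ |q * k ^ i - p + 1| := by
    intro hpq i
    have hki : (1:ℝ) ≤ k ^ i := one_le_pow₀ hk.le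
    have h1 : q ≤ q * k ^ i := le_mul_of_one_le_right hq.le hki
    have hpk : (p - 1) * k ≤ q := by
      have := mul_le_mul_of_nonneg_right hpq hk0.le
      rwa [div_mul_cancel₀ q (by linarith : k ≠ 0)] at this
    have h2 : c ≤ q * k ^ i - p + 1 := by nlinarith
    exact h2.trans (le_abs_self _)
  refine ⟨?_, second⟩
  by_cases H : ∀ i : ℕ, c ≤ |q * k ^ i - p + 1|
  · exact ⟨q, div_lt_self hq hk, le_refl q, H⟩
  push_neg at H
  obtain ⟨j, hj⟩ := H
  have hkj : (1:ℝ) ≤ k ^ j := one_le_pow₀ hk.le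
  have hkj0 : (0:ℝ) < k ^ j := by linarith
  rw [abs_lt] at hj
  obtain ⟨hj1, hj2⟩ := hj
  have ha_lo : q * k ^ j - c < p - 1 := by linarith
  have ha_hi : p - 1 < q * k ^ j + c := by linarith
  have hqkj : q ≤ q * k ^ j := le_mul_of_one_le_right hq.le hkj
  have hac : 0 < p - 1 - c := by
    nlinarith [mul_lt_mul_of_pos_right ha_lo hk0,
      mul_le_mul_of_nonneg_right hqkj hk0.le, mul_pos hq hk0]
  refine ⟨(p - 1 - c) / k ^ j, ?_, ?_, ?_⟩
  · rw [div_lt_div_iff₀ hk0 hkj0]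
    nlinarith [mul_lt_mul_of_pos_right ha_lo hk0,
      mul_le_mul_of_nonneg_right hqkj (by linarith : (0:ℝ) ≤ k - 1)]
  · rw [div_le_iff₀ hkj0]
    linarith
  · intro i
    rcases lt_trichotomy i j with hij | hij | hij
    · have hpow : k ^ i * k ≤ k ^ j := by
        calc k ^ i * k = k ^ (i + 1) := (pow_succ k i).symm
        _ ≤ k ^ j := pow_le_pow_right₀ hk.le hij
      have h3 : (p - 1 - c) / k ^ j * k ^ i ≤ (p - 1 - c) / k := by
        rw [div_mul_eq_mul_div, div_le_div_iff₀ hkj0 hk0]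
        nlinarith [mul_le_mul_of_nonneg_left hpow hac.le]
      have h4 : (p - 1 - c) / k ≤ p - 1 - c := div_le_self hac.le hk.le
      rw [le_abs]
      right
      linarith
    · subst hij
      have h0 : (p - 1 - c) / k ^ i * k ^ i - p + 1 = -c := by
        rw [div_mul_cancel₀ _ hkj0.ne']
        ring
      rw [h0, abs_neg, abs_of_pos hc]
    · have hpow : k ^ j * k ≤ k ^ i := by
        calc k ^ j * k = k ^ (j + 1) := (pow_succ k j).symm
        _ ≤ k ^ i := pow_le_pow_right₀ hk.le hij
      have h3 : (p - 1 - c) * k ≤ (p - 1 - c) / k ^ j * k ^ i := by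
        rw [div_mul_eq_mul_div, le_div_iff₀ hkj0]
        nlinarith [mul_le_mul_of_nonneg_left hpow hac.le]
      have h5 : c ≤ (p - 1 - c) / k ^ j * k ^ i - p + 1 := by
        nlinarith [mul_le_mul_of_nonneg_right
          (show q - c ≤ p - 1 by linarith) (by linarith : (0:ℝ) ≤ k - 1)]
      exact h5.trans (le_abs_self _)
end

section
/- Let H : [0,∞) → ℝ be continuously differentiable, non-negative and non-increasing, and let h : [0,∞) → ℝ solve h'' = H·h with h(0) = 0, h'(0) = 1, with h > 0 on (0,∞). Then (h'(t))² − h(t)h''(t) ≥ 1 for all t ≥ 0, and equality holds at some t₀ > 0 if and only if H is constant on [0,t₀]. -/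
/-- (h')² − h h'' ≥ 1, with equality at t₀ > 0 iff H is constant on [0,t₀]. -/
theorem stmt_4 (H h : ℝ → ℝ)
    (hH : Differentiable ℝ H) (hHc : Continuous (deriv H))
    (hHnn : ∀ t ≥ (0 : ℝ), 0 ≤ H t)
    (hHanti : AntitoneOn H (Set.Ici 0))
    (hh1 : Differentiable ℝ h) (hh2 : Differentiable ℝ (deriv h))
    (hode : ∀ t ≥ (0 : ℝ), deriv (deriv h) t = H t * h t)
    (h0 : h 0 = 0) (h1 : deriv h 0 = 1)
    (hpos : ∀ t > (0 : ℝ), 0 < h t) :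
    (∀ t ≥ (0 : ℝ), 1 ≤ (deriv h t) ^ 2 - h t * deriv (deriv h) t) ∧
    ∀ t₀ > (0 : ℝ),
      ((deriv h t₀) ^ 2 - h t₀ * deriv (deriv h) t₀ = 1 ↔
        ∀ s ∈ Set.Icc 0 t₀, H s = H 0) := by
  set W : ℝ → ℝ := fun t => (deriv h t) ^ 2 - H t * (h t) ^ 2 with hWdef
  -- derivative of H is nonpositive on [0,∞)
  have hH' : ∀ s ≥ (0 : ℝ), deriv H s ≤ 0 := by
    intro s hs
    have hd : HasDerivAt H (deriv H s) s := (hH s).hasDerivAt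
    have h2 : Filter.Tendsto (slope H s) (nhdsWithin s (Set.Ioi s)) (nhds (deriv H s)) :=
      (hasDerivAt_iff_tendsto_slope.mp hd).mono_left
        (nhdsWithin_mono _ (fun x hx => ne_of_gt hx))
    refine le_of_tendsto h2 ?_
    filter_upwards [self_mem_nhdsWithin] with u hu
    have hsu : s < u := hu
    have hHu : H u ≤ H s := hHanti (Set.mem_Ici.mpr hs) (Set.mem_Ici.mpr (hs.trans hsu.le)) hsu.le
    rw [slope_def_field]
    exact div_nonpos_of_nonpos_of_nonneg (by linarith) (by linarith)
  -- derivative of W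
  have hWd : ∀ t, HasDerivAt W
      (2 * deriv h t * deriv (deriv h) t -
        (deriv H t * (h t) ^ 2 + H t * (2 * h t * deriv h t))) t := by
    intro t
    have A : HasDerivAt (fun t => (deriv h t) ^ 2) (2 * deriv h t * deriv (deriv h) t) t := by
      have : HasDerivAt (fun x => deriv h x ^ 2) (((2:ℕ):ℝ) * deriv h t ^ (2 - 1) * deriv (deriv h) t) t := ((hh2 t).hasDerivAt).fun_pow 2
      convert this using 1
      push_cast
      ring
    have B : HasDerivAt (fun t => H t * (h t) ^ 2)
        (deriv H t * (h t) ^ 2 + H t * (2 * h t * deriv h t)) t := by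
      have hp : HasDerivAt (fun t => (h t) ^ 2) (2 * h t * deriv h t) t := by
        have : HasDerivAt (fun x => h x ^ 2) (((2:ℕ):ℝ) * h t ^ (2 - 1) * deriv h t) t := ((hh1 t).hasDerivAt).fun_pow 2
        convert this using 1
        push_cast
        ring
      exact ((hH t).hasDerivAt).mul hp
    exact A.sub B
  have hWdiff : Differentiable ℝ W := fun t => (hWd t).differentiableAt
  have hWderiv : ∀ t ≥ (0:ℝ), deriv W t = -(deriv H t) * (h t) ^ 2 := by
    intro t ht
    rw [(hWd t).deriv, hode t ht]
    ring
  have hW0 : W 0 = 1 := by simp [hWdef, h0, h1]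
  -- W is monotone on [0,∞)
  have hmono : MonotoneOn W (Set.Ici 0) := by
    refine monotoneOn_of_deriv_nonneg (convex_Ici 0) hWdiff.continuous.continuousOn
      hWdiff.differentiableOn ?_
    intro x hx
    rw [interior_Ici] at hx
    rw [hWderiv x hx.le]
    exact mul_nonneg (neg_nonneg.mpr (hH' x hx.le)) (sq_nonneg _)
  have hexpr : ∀ t ≥ (0:ℝ), (deriv h t) ^ 2 - h t * deriv (deriv h) t = W t := by
    intro t ht
    rw [hode t ht, hWdef]
    ring
  have hge : ∀ t ≥ (0:ℝ), 1 ≤ W t := by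
    intro t ht
    have := hmono (Set.mem_Ici.mpr le_rfl) (Set.mem_Ici.mpr ht) ht
    linarith [hW0 ▸ this]
  constructor
  · intro t ht
    rw [hexpr t ht]
    exact hge t ht
  · intro t₀ ht₀
    rw [hexpr t₀ ht₀.le]
    constructor
    · -- W t₀ = 1 → H constant on [0,t₀]
      intro hWt₀
      have hWconst : ∀ s ∈ Set.Icc (0:ℝ) t₀, W s = 1 := by
        intro s hs
        have h1s : 1 ≤ W s := hge s hs.1
        have h2s : W s ≤ W t₀ :=
          hmono (Set.mem_Ici.mpr hs.1) (Set.mem_Ici.mpr ht₀.le) hs.2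
        linarith [hWt₀ ▸ h2s]
      have hderivH0 : ∀ s ∈ Set.Ioo (0:ℝ) t₀, deriv H s = 0 := by
        intro s hs
        have hWeq : W =ᶠ[nhds s] fun _ => 1 := by
          filter_upwards [Ioo_mem_nhds hs.1 hs.2] with u hu
          exact hWconst u ⟨hu.1.le, hu.2.le⟩
        have : deriv W s = 0 := by
          rw [hWeq.deriv_eq]
          simp
        rw [hWderiv s hs.1.le] at this
        have hhs : 0 < h s := hpos s hs.1
        have := mul_eq_zero.mp this
        rcases this with h' | h'
        · linarith [neg_eq_zero.mp h']
        · exact absurd h' (by positivity)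
      -- H monotone and antitone on [0,t₀] with zero derivative
      have hHm : MonotoneOn H (Set.Icc 0 t₀) := by
        refine monotoneOn_of_deriv_nonneg (convex_Icc 0 t₀) hH.continuous.continuousOn
          hH.differentiableOn ?_
        intro x hx
        rw [interior_Icc] at hx
        rw [hderivH0 x hx]
      have hHa : AntitoneOn H (Set.Icc 0 t₀) := by
        refine antitoneOn_of_deriv_nonpos (convex_Icc 0 t₀) hH.continuous.continuousOn
          hH.differentiableOn ?_
        intro x hx
        rw [interior_Icc] at hx
        rw [hderivH0 x hx]
      intro s hs
      have h0mem : (0:ℝ) ∈ Set.Icc (0:ℝ) t₀ := ⟨le_rfl, ht₀.le⟩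
      exact le_antisymm (hHa h0mem hs hs.1) (hHm h0mem hs hs.1)
    · -- H constant on [0,t₀] → W t₀ = 1
      intro hHconst
      have hderivH0 : ∀ s ∈ Set.Ioo (0:ℝ) t₀, deriv H s = 0 := by
        intro s hs
        have hHeq : H =ᶠ[nhds s] fun _ => H 0 := by
          filter_upwards [Ioo_mem_nhds hs.1 hs.2] with u hu
          exact hHconst u ⟨hu.1.le, hu.2.le⟩
        rw [hHeq.deriv_eq]
        simp
      have hWa : AntitoneOn W (Set.Icc 0 t₀) := by
        refine antitoneOn_of_deriv_nonpos (convex_Icc 0 t₀) hWdiff.continuous.continuousOn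
          hWdiff.differentiableOn ?_
        intro x hx
        rw [interior_Icc] at hx
        rw [hWderiv x hx.1.le, hderivH0 x hx]
        simp
      have h0mem : (0:ℝ) ∈ Set.Icc (0:ℝ) t₀ := ⟨le_rfl, ht₀.le⟩
      have ht₀mem : t₀ ∈ Set.Icc (0:ℝ) t₀ := ⟨ht₀.le, le_rfl⟩
      have hle : W t₀ ≤ W 0 := hWa h0mem ht₀mem ht₀.le
      have hge' : 1 ≤ W t₀ := hge t₀ ht₀.le
      linarith [hW0 ▸ hle]
end

section
/- Let a < b ≤ ∞ and let f, g : (a,b) → (0,∞) be continuous with ∫_t^b f and ∫_t^b g finite for every t ∈ (a,b). If f/g is non-decreasing on (a,b), then f(t) / ∫_t^b f(s) ds ≤ g(t) / ∫_t^b g(s) ds for every t ∈ (a,b). -/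
open MeasureTheory

/-- if f/g is non-decreasing, then f(t)/∫_t^b f ≤ g(t)/∫_t^b g. -/
theorem stmt_6 (a : ℝ) (b : EReal) (hab : (a : EReal) < b)
    (f g : ℝ → ℝ)
    (S : ℝ → Set ℝ) (hS : ∀ t, S t = {s : ℝ | t < s ∧ (s : EReal) < b})
    (hfc : ContinuousOn f {s : ℝ | a < s ∧ (s : EReal) < b})
    (hgc : ContinuousOn g {s : ℝ | a < s ∧ (s : EReal) < b})
    (hfpos : ∀ s : ℝ, a < s → (s : EReal) < b → 0 < f s)
    (hgpos : ∀ s : ℝ, a < s → (s : EReal) < b → 0 < g s)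
    (hfint : ∀ t : ℝ, a < t → (t : EReal) < b → IntegrableOn f (S t))
    (hgint : ∀ t : ℝ, a < t → (t : EReal) < b → IntegrableOn g (S t))
    (hmono : MonotoneOn (fun s => f s / g s) {s : ℝ | a < s ∧ (s : EReal) < b}) :
    ∀ t : ℝ, a < t → (t : EReal) < b →
      f t / ∫ s in S t, f s ≤ g t / ∫ s in S t, g s := by
  intro t hat htb
  have hft := hfpos t hat htb
  have hgt := hgpos t hat htb
  set c : ℝ := f t / g t with hc
  have hmeas : MeasurableSet (S t) := by
    rw [hS]
    have : {s : ℝ | t < s ∧ (s : EReal) < b} =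
        Set.Ioi t ∩ ((fun s : ℝ => (s : EReal)) ⁻¹' Set.Iio b) := by
      ext s; simp [Set.mem_Ioi, Set.mem_Iio, and_comm]
    rw [this]
    exact measurableSet_Ioi.inter
      (continuous_coe_real_ereal.measurable measurableSet_Iio)
  have hptw : ∀ s ∈ S t, c * g s ≤ f s := by
    intro s hs
    rw [hS] at hs
    obtain ⟨hts, hsb⟩ := hs
    have has : a < s := hat.trans hts
    have hgs := hgpos s has hsb
    have hmon := hmono ⟨hat, htb⟩ ⟨has, hsb⟩ hts.le
    exact (le_div_iff₀ hgs).mp hmon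
  set J : ℝ := ∫ s in S t, g s with hJdef
  set I : ℝ := ∫ s in S t, f s with hIdef
  have hgint' := hgint t hat htb
  have hfint' := hfint t hat htb
  have hJ : 0 < J := by
    rw [hJdef]
    rw [setIntegral_pos_iff_support_of_nonneg_ae ?_ hgint']
    · obtain ⟨x, htx, hxb⟩ := EReal.lt_iff_exists_real_btwn.mp htb
      have htx' : t < x := by exact_mod_cast htx
      have hsub : Set.Ioo t x ⊆ Function.support g ∩ S t := by
        intro s hs
        have hsb : (s : EReal) < b := lt_trans (by exact_mod_cast hs.2) hxb
        have has : a < s := hat.trans hs.1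
        constructor
        · exact (hgpos s has hsb).ne'
        · rw [hS]; exact ⟨hs.1, hsb⟩
      calc (0 : ENNReal) < MeasureTheory.volume (Set.Ioo t x) := by
            simp [Real.volume_Ioo, htx']
        _ ≤ _ := measure_mono hsub
    · filter_upwards [ae_restrict_mem hmeas] with s hs
      rw [hS] at hs
      exact (hgpos s (hat.trans hs.1) hs.2).le
  have hcJ : c * J ≤ I := by
    have h1 : ∫ s in S t, c * g s = c * J := by
      rw [hJdef]; exact integral_const_mul c g
    rw [← h1, hIdef]
    exact setIntegral_mono_on (hgint'.const_mul c) hfint' hmeas hptw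
  have hI : 0 < I := lt_of_lt_of_le (mul_pos (div_pos hft hgt) hJ) hcJ
  rw [div_le_div_iff₀ hI hJ]
  have key : f t * J = g t * (c * J) := by
    field_simp [hc]
    rw [hc]; field_simp
  rw [key]
  exact mul_le_mul_of_nonneg_left hcJ hgt.le
end

section
/- Let H : [0,∞) → [0,∞) be continuous with i := ∫_0^∞ t H(t) dt < ∞, and let h : [0,∞) → ℝ solve h'' = H·h, h(0) = 0, h'(0) = 1 (so h > 0 on (0,∞)). Then h(t) ≤ e^{i} · t for all t ≥ 0. -/
open MeasureTheory Set Filter Topology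

private lemma gw_pos (H h : ℝ → ℝ) (hHnn : ∀ t ≥ (0:ℝ), 0 ≤ H t)
    (hh1 : Differentiable ℝ h) (hh2 : Differentiable ℝ (deriv h))
    (hode : ∀ t ≥ (0:ℝ), deriv (deriv h) t = H t * h t)
    (h0 : h 0 = 0) (h1 : deriv h 0 = 1) :
    ∀ t ≥ (0:ℝ), 0 ≤ h t ∧ 1 ≤ deriv h t := by
  by_contra hcon
  push_neg at hcon
  obtain ⟨t0, ht0, hbad⟩ := hcon
  set B : Set ℝ := {t | 0 ≤ t ∧ (h t < 0 ∨ deriv h t < 1)} with hBdef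
  have hmem : ∀ s, 0 ≤ s → ¬(0 ≤ h s ∧ 1 ≤ deriv h s) → s ∈ B := by
    intro s hs hn
    refine ⟨hs, ?_⟩
    by_contra hor
    push_neg at hor
    exact hn ⟨hor.1, hor.2⟩
  have hBne : B.Nonempty := ⟨t0, hmem t0 ht0 (by intro hcc; exact (hbad hcc.1).not_ge hcc.2)⟩
  have hBbd : BddBelow B := ⟨0, fun x hx => hx.1⟩
  set c := sInf B with hc
  have hc0 : 0 ≤ c := le_csInf hBne fun x hx => hx.1
  have hlt : ∀ s, 0 ≤ s → s < c → 0 ≤ h s ∧ 1 ≤ deriv h s := by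
    intro s hs hsc
    by_contra hn
    exact absurd (csInf_le hBbd (hmem s hs hn)) (not_le.2 hsc)
  have hcB : 0 ≤ h c ∧ 1 ≤ deriv h c := by
    rcases hc0.eq_or_lt with hce | hcpos
    · exact ⟨by rw [← hce, h0], by rw [← hce, h1]⟩
    · have hIoo : Ioo 0 c ∈ 𝓝[<] c := Ioo_mem_nhdsLT_of_mem ⟨hcpos, le_refl c⟩
      have h1' : ∀ᶠ s in 𝓝[<] c, 0 ≤ h s := by
        filter_upwards [hIoo] with s hs; exact (hlt s hs.1.le hs.2).1
      have h2' : ∀ᶠ s in 𝓝[<] c, 1 ≤ deriv h s := by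
        filter_upwards [hIoo] with s hs; exact (hlt s hs.1.le hs.2).2
      have th : Tendsto h (𝓝[<] c) (𝓝 (h c)) :=
        (hh1.continuous.tendsto c).mono_left nhdsWithin_le_nhds
      have th' : Tendsto (deriv h) (𝓝[<] c) (𝓝 (deriv h c)) :=
        (hh2.continuous.tendsto c).mono_left nhdsWithin_le_nhds
      exact ⟨ge_of_tendsto th h1', ge_of_tendsto th' h2'⟩
  have hcin : c ∈ {s : ℝ | 0 < deriv h s} := lt_of_lt_of_le one_pos hcB.2
  have hnhds : {s : ℝ | 0 < deriv h s} ∈ 𝓝 c :=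
    (isOpen_lt continuous_const hh2.continuous).mem_nhds hcin
  obtain ⟨δ, hδpos, hball⟩ := Metric.mem_nhds_iff.1 hnhds
  set d := c + δ/2 with hd
  have hcd : c ≤ d := by simp [hd]; linarith
  have hpos : ∀ s ∈ Icc c d, 0 < deriv h s := by
    intro s hs
    apply hball
    rw [Metric.mem_ball, Real.dist_eq, abs_of_nonneg (by linarith [hs.1])]
    have := hs.2
    simp only [hd] at this
    linarith
  have hmono_h : StrictMonoOn h (Icc c d) := by
    apply strictMonoOn_of_deriv_pos (convex_Icc _ _) hh1.continuous.continuousOn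
    intro x hx
    rw [interior_Icc] at hx
    exact hpos x ⟨hx.1.le, hx.2.le⟩
  have hmono_h' : MonotoneOn (deriv h) (Icc c d) := by
    apply monotoneOn_of_deriv_nonneg (convex_Icc _ _) hh2.continuous.continuousOn
      hh2.differentiableOn
    intro x hx
    rw [interior_Icc] at hx
    have hx0 : 0 ≤ x := le_trans hc0 hx.1.le
    rw [hode x hx0]
    have hhx : h c < h x := hmono_h (left_mem_Icc.2 hcd) ⟨hx.1.le, hx.2.le⟩ hx.1
    exact mul_nonneg (hHnn x hx0) (le_of_lt (lt_of_le_of_lt hcB.1 hhx))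
  have hgood : ∀ s ∈ Icc c d, 0 ≤ h s ∧ 1 ≤ deriv h s := by
    intro s hs
    refine ⟨le_trans hcB.1 (hmono_h.monotoneOn (left_mem_Icc.2 hcd) hs hs.1), ?_⟩
    exact le_trans hcB.2 (hmono_h' (left_mem_Icc.2 hcd) hs hs.1)
  have hBd : ∀ x ∈ B, d ≤ x := by
    intro x hx
    by_contra hxd
    push_neg at hxd
    rcases lt_or_ge x c with hxc | hcx
    · have := hlt x hx.1 hxc
      rcases hx.2 with p | p <;> linarith [this.1, this.2]
    · have := hgood x ⟨hcx, hxd.le⟩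
      rcases hx.2 with p | p <;> linarith [this.1, this.2]
  have : d ≤ c := hc ▸ le_csInf hBne hBd
  simp only [hd] at this
  linarith

/-- Greene–Wu comparison: h(t) ≤ e^{∫₀^∞ sH(s) ds} t. -/
theorem stmt_14 (H h : ℝ → ℝ)
    (hHc : ContinuousOn H (Set.Ici 0)) (hHnn : ∀ t ≥ (0 : ℝ), 0 ≤ H t)
    (hint : IntegrableOn (fun s => s * H s) (Set.Ioi 0))
    (hh1 : Differentiable ℝ h) (hh2 : Differentiable ℝ (deriv h))
    (hode : ∀ t ≥ (0 : ℝ), deriv (deriv h) t = H t * h t)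
    (h0 : h 0 = 0) (h1 : deriv h 0 = 1) :
    ∀ t ≥ (0 : ℝ), h t ≤ Real.exp (∫ s in Set.Ioi (0 : ℝ), s * H s) * t := by
  set i := ∫ s in Set.Ioi (0:ℝ), s * H s with hi
  set K : ℝ → ℝ := fun s => H (max s 0) with hKdef
  have hKc : Continuous K :=
    hHc.comp_continuous (continuous_id.max continuous_const) (fun x => Set.mem_Ici.2 (le_max_right _ _))
  have hKnn : ∀ s, 0 ≤ K s := fun s => hHnn _ (le_max_right _ _)
  have hKH : ∀ s, 0 ≤ s → K s = H s := fun s hs => by simp [hKdef, max_eq_left hs]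
  have hfc : Continuous (fun s : ℝ => s * K s) := continuous_id.mul hKc
  set I : ℝ → ℝ := fun u => ∫ s in (0:ℝ)..u, s * K s with hIdef
  have hIderiv : ∀ u, HasDerivAt I (u * K u) u := fun u =>
    intervalIntegral.integral_hasDerivAt_right (hfc.intervalIntegrable _ _)
      (hfc.stronglyMeasurableAtFilter _ _) hfc.continuousAt
  have hpos := gw_pos H h hHnn hh1 hh2 hode h0 h1
  -- Step: h u ≤ u * deriv h u for u ≥ 0
  have hψd : ∀ u, HasDerivAt (fun v => v * deriv h v - h v)
      (1 * deriv h u + u * deriv (deriv h) u - deriv h u) u := by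
    intro u
    exact ((hasDerivAt_id u).mul (hh2 u).hasDerivAt).sub (hh1 u).hasDerivAt
  have hpsi : ∀ u ≥ (0:ℝ), h u ≤ u * deriv h u := by
    have hmono : MonotoneOn (fun v => v * deriv h v - h v) (Ici 0) := by
      apply monotoneOn_of_deriv_nonneg (convex_Ici 0)
      · exact ((continuous_id.mul hh2.continuous).sub hh1.continuous).continuousOn
      · intro x _; exact (hψd x).differentiableAt.differentiableWithinAt
      · intro x hx
        rw [interior_Ici] at hx
        rw [(hψd x).deriv, hode x hx.le]
        have h2 := hpos x hx.le
        have := mul_nonneg (hHnn x hx.le) h2.1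
        nlinarith [mul_nonneg hx.le this]
    intro u hu
    have := hmono (self_mem_Ici) hu hu
    simp only [h0, h1] at this
    linarith
  -- Step: deriv h u ≤ exp (I u)
  have hgd : ∀ u, HasDerivAt (fun v => deriv h v * Real.exp (-(I v)))
      (deriv (deriv h) u * Real.exp (-(I u)) +
        deriv h u * (Real.exp (-(I u)) * -(u * K u))) u := by
    intro u
    exact (hh2 u).hasDerivAt.mul ((hIderiv u).neg.exp)
  have hganti : AntitoneOn (fun v => deriv h v * Real.exp (-(I v))) (Ici 0) := by
    apply antitoneOn_of_deriv_nonpos (convex_Ici 0)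
    · have hIc : Continuous I :=
        Differentiable.continuous (fun x => (hIderiv x).differentiableAt)
      exact (hh2.continuous.mul hIc.neg.rexp).continuousOn
    · intro x _; exact (hgd x).differentiableAt.differentiableWithinAt
    · intro x hx
      rw [interior_Ici] at hx
      rw [(hgd x).deriv, hode x hx.le, hKH x hx.le]
      have h3 := hpsi x hx.le
      have hH := hHnn x hx.le
      have hE : 0 < Real.exp (-(I x)) := Real.exp_pos _
      nlinarith [mul_nonneg hH (sub_nonneg.2 h3)]
  have hI0 : I 0 = 0 := by simp [hIdef]
  have hderiv_le : ∀ u ≥ (0:ℝ), deriv h u ≤ Real.exp (I u) := by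
    intro u hu
    have hgu := hganti (self_mem_Ici) hu hu
    simp only [h1, hI0, neg_zero, Real.exp_zero, mul_one] at hgu
    have hE : (0:ℝ) < Real.exp (I u) := Real.exp_pos _
    calc deriv h u = (deriv h u * Real.exp (-(I u))) * Real.exp (I u) := by
          rw [mul_assoc, ← Real.exp_add]; simp
      _ ≤ 1 * Real.exp (I u) := mul_le_mul_of_nonneg_right hgu hE.le
      _ = Real.exp (I u) := one_mul _
  -- Step: I u ≤ i
  have hIle : ∀ u ≥ (0:ℝ), I u ≤ i := by
    intro u hu
    have heq : I u = ∫ s in Set.Ioc 0 u, s * H s := by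
      rw [hIdef]
      simp only []
      rw [intervalIntegral.integral_of_le hu]
      apply setIntegral_congr_fun measurableSet_Ioc
      intro s hs
      simp [hKH s hs.1.le]
    rw [heq, hi]
    apply setIntegral_mono_set hint
    · filter_upwards [ae_restrict_mem measurableSet_Ioi] with s hs
      exact mul_nonneg hs.le (hHnn s hs.le)
    · exact (Set.Ioc_subset_Ioi_self).eventuallyLE
  -- Final step
  have hφd : ∀ x : ℝ, HasDerivAt (fun u => Real.exp i * u - h u)
      (Real.exp i * 1 - deriv h x) x := by
    intro x
    exact ((hasDerivAt_id x).const_mul _).sub (hh1 x).hasDerivAt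
  have hmonophi : MonotoneOn (fun u => Real.exp i * u - h u) (Ici 0) := by
    apply monotoneOn_of_deriv_nonneg (convex_Ici 0)
    · exact ((continuous_const.mul continuous_id).sub hh1.continuous).continuousOn
    · intro x _; exact (hφd x).differentiableAt.differentiableWithinAt
    · intro x hx
      rw [interior_Ici] at hx
      rw [(hφd x).deriv]
      have h4 := hderiv_le x hx.le
      have h5 := Real.exp_le_exp.2 (hIle x hx.le)
      linarith
  intro t ht
  have := hmonophi (self_mem_Ici) ht ht
  simp only [h0, mul_zero, sub_zero, mul_one] at this
  linarith
end

section
/- Let p > 1, k > 1 and set, for i ≥ 0, the iteration inequality J_{i+1}^{1/k} ≤ C · D^{i+1} · J_i for positive reals J_i, where C, D > 0 and D ≥ 1. If L := lim_{i→∞} J_i^{1/k^{i+1}} ≤ 1, then J_0 ≤ C^{k/(k−1)} · D^{k²/(k−1)²} · L', where L' denotes the limit above; precisely, J_0 ≤ C^{Σ_{j≥0} k^{-j}} · D^{Σ_{j≥0}(j+1)k^{-j}} · lim_{i→∞} J_i^{1/k^{i+1}} = C^{k/(k−1)} D^{k²/(k−1)²} · L. -/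
open Filter

/-- abstract Moser iteration bound. -/
theorem stmt_19 (k C D L : ℝ) (hk : 1 < k) (hC : 0 < C) (hD0 : 0 < D) (hD : 1 ≤ D)
    (J : ℕ → ℝ) (hJ : ∀ i, 0 < J i)
    (hiter : ∀ i : ℕ, J i ≤ C * D ^ (i + 1) * J (i + 1) ^ (1 / k))
    (hL : Tendsto (fun i : ℕ => J i ^ (1 / k ^ (i + 1))) atTop (nhds L))
    (hL1 : L ≤ 1) :
    J 0 ≤ C ^ (k / (k - 1)) * D ^ (k ^ 2 / (k - 1) ^ 2) * L := by
  have hk0 : (0:ℝ) < k := lt_trans one_pos hk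
  set r : ℝ := 1 / k with hr
  have hr0 : 0 < r := by positivity
  have hr1 : r < 1 := by
    rw [hr, div_lt_one hk0]; exact hk
  have hrk : r * k = 1 := by rw [hr, one_div, inv_mul_cancel₀ (ne_of_gt hk0)]
  -- key finite iteration bound
  have key : ∀ n : ℕ, J 0 ≤ C ^ (∑ i ∈ Finset.range n, r ^ i) *
      D ^ (∑ i ∈ Finset.range n, ((i : ℝ) + 1) * r ^ i) * J n ^ (r ^ n) := by
    intro n
    induction n with
    | zero => simp
    | succ n ih =>
      have hstep : J n ^ (r ^ n) ≤ C ^ (r ^ n) * D ^ (((n:ℝ) + 1) * r ^ n) *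
          J (n + 1) ^ (r ^ (n + 1)) := by
        have h1 : J n ^ (r ^ n) ≤ (C * D ^ (n + 1) * J (n + 1) ^ (1 / k)) ^ (r ^ n) :=
          Real.rpow_le_rpow (le_of_lt (hJ n)) (hiter n) (le_of_lt (pow_pos hr0 n))
        refine h1.trans_eq ?_
        rw [Real.mul_rpow (mul_nonneg (le_of_lt hC) (pow_nonneg (le_of_lt hD0) _))
            (Real.rpow_nonneg (le_of_lt (hJ _)) _),
          Real.mul_rpow (le_of_lt hC) (pow_nonneg (le_of_lt hD0) _),
          ← Real.rpow_natCast D (n + 1), ← Real.rpow_mul (le_of_lt hD0),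
          ← Real.rpow_mul (le_of_lt (hJ (n + 1)))]
        congr 2
        · push_cast; ring
        · rw [← hr]
          ring
      calc J 0 ≤ C ^ (∑ i ∈ Finset.range n, r ^ i) *
            D ^ (∑ i ∈ Finset.range n, ((i : ℝ) + 1) * r ^ i) * J n ^ (r ^ n) := ih
        _ ≤ C ^ (∑ i ∈ Finset.range n, r ^ i) *
            D ^ (∑ i ∈ Finset.range n, ((i : ℝ) + 1) * r ^ i) *
            (C ^ (r ^ n) * D ^ (((n:ℝ) + 1) * r ^ n) * J (n + 1) ^ (r ^ (n + 1))) := by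
            exact mul_le_mul_of_nonneg_left hstep (by positivity)
        _ = _ := by
            rw [Finset.sum_range_succ, Finset.sum_range_succ,
              Real.rpow_add hC, Real.rpow_add hD0]
            ring
  -- sums of the exponents
  have hs1 : HasSum (fun i : ℕ => r ^ i) (k / (k - 1)) := by
    have := hasSum_geometric_of_lt_one (le_of_lt hr0) hr1
    convert this using 1
    rw [hr]
    field_simp
  have hs2 : HasSum (fun i : ℕ => ((i : ℝ) + 1) * r ^ i) (k ^ 2 / (k - 1) ^ 2) := by
    have h1 : HasSum (fun i : ℕ => (i : ℝ) * r ^ i) (r / (1 - r) ^ 2) :=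
      hasSum_coe_mul_geometric_of_norm_lt_one (by rwa [Real.norm_eq_abs, abs_of_pos hr0])
    have h2 := h1.add (hasSum_geometric_of_lt_one (le_of_lt hr0) hr1)
    have h3 : (fun i : ℕ => (i : ℝ) * r ^ i + r ^ i) = fun i : ℕ => ((i : ℝ) + 1) * r ^ i := by
      funext i; ring
    rw [h3] at h2
    convert h2 using 1
    rw [hr]
    have hk1 : k - 1 ≠ 0 := by intro h; linarith
    field_simp
    ring
  -- limit of the right-hand side
  have hL0 : 0 ≤ L :=
    le_of_tendsto_of_tendsto tendsto_const_nhds hL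
      (Filter.Eventually.of_forall fun i => Real.rpow_nonneg (le_of_lt (hJ i)) _)
  have hJr : ∀ n : ℕ, J n ^ (r ^ n) = (J n ^ (1 / k ^ (n + 1))) ^ k := by
    intro n
    rw [← Real.rpow_mul (le_of_lt (hJ n))]
    congr 1
    rw [hr, div_pow, one_pow, pow_succ]
    field_simp
  have htend : Tendsto (fun n : ℕ => C ^ (∑ i ∈ Finset.range n, r ^ i) *
      D ^ (∑ i ∈ Finset.range n, ((i : ℝ) + 1) * r ^ i) * J n ^ (r ^ n)) atTop
      (nhds (C ^ (k / (k - 1)) * D ^ (k ^ 2 / (k - 1) ^ 2) * L ^ k)) := by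
    have t1 : Tendsto (fun n : ℕ => C ^ (∑ i ∈ Finset.range n, r ^ i)) atTop
        (nhds (C ^ (k / (k - 1)))) :=
      (tendsto_const_nhds.rpow hs1.tendsto_sum_nat (Or.inl (ne_of_gt hC)))
    have t2 : Tendsto (fun n : ℕ => D ^ (∑ i ∈ Finset.range n, ((i : ℝ) + 1) * r ^ i)) atTop
        (nhds (D ^ (k ^ 2 / (k - 1) ^ 2))) :=
      (tendsto_const_nhds.rpow hs2.tendsto_sum_nat (Or.inl (ne_of_gt hD0)))
    have t3 : Tendsto (fun n : ℕ => J n ^ (r ^ n)) atTop (nhds (L ^ k)) := by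
      simp only [hJr]
      exact hL.rpow_const (Or.inr (le_of_lt hk0))
    exact (t1.mul t2).mul t3
  have hle : J 0 ≤ C ^ (k / (k - 1)) * D ^ (k ^ 2 / (k - 1) ^ 2) * L ^ k :=
    le_of_tendsto_of_tendsto tendsto_const_nhds htend (Filter.Eventually.of_forall key)
  refine hle.trans (mul_le_mul_of_nonneg_left ?_ (by positivity))
  rcases eq_or_lt_of_le hL0 with h | h
  · rw [← h, Real.zero_rpow (ne_of_gt hk0)]
  · exact (Real.rpow_le_rpow_of_exponent_ge h hL1 (le_of_lt hk)).trans_eq (Real.rpow_one L)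
end
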